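/- arXiv:1805.06434 — 2 statements merged into one kernel-verified Lean document; each statement's English description precedes it below -/
import Mathlib

section
/- Let p ≥ 1, a ∈ ℝ, and t ∈ [0,1]. Then |a - t|^p ≥ (1-t)^{p-1}(|a|^p - t). -/
open Real

/-- Elementary convexity inequality (Frank–Seiringer, Lemma 2.6):
for p ≥ 1, a ∈ ℝ, t ∈ [0,1], one has |a - t|^p ≥ (1-t)^{p-1}(|a|^p - t). -/
theorem abs_sub_rpow_ge (p a t : ℝ) (hp : 1 ≤ p) (ht : t ∈ Set.Icc (0 : ℝ) 1) :
    (1 - t) ^ (p - 1) * (|a| ^ p - t) ≤ |a - t| ^ p := by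
  obtain ⟨ht0, ht1⟩ := ht
  have htabs : |t| = t := abs_of_nonneg ht0
  have habs : |a| - t ≤ |a - t| := by
    calc |a| - t = |a| - |t| := by rw [htabs]
    _ ≤ |a - t| := abs_sub_abs_le_abs_sub a t
  rcases eq_or_lt_of_le hp with rfl | hp1
  · simpa [Real.rpow_one] using habs
  rcases le_or_gt (|a| ^ p) t with h | h
  · have h0 : (1 - t) ^ (p - 1) * (|a| ^ p - t) ≤ 0 :=
      mul_nonpos_of_nonneg_of_nonpos (Real.rpow_nonneg (by linarith) _) (by linarith)
    exact h0.trans (Real.rpow_nonneg (abs_nonneg _) p)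
  · have hta : t ≤ |a| := by
      rcases eq_or_ne a 0 with rfl | ha
      · simp only [abs_zero, Real.zero_rpow (by linarith : p ≠ 0)] at h
        linarith
      rcases le_or_gt (|a|) 1 with h1 | h1
      · have := Real.rpow_le_rpow_of_exponent_ge (abs_pos.mpr ha) h1 hp
        rw [Real.rpow_one] at this
        linarith
      · linarith
    have hmain : (|a| - t) ^ p ≤ |a - t| ^ p :=
      Real.rpow_le_rpow (by linarith) habs (by linarith)
    rcases eq_or_lt_of_le ht1 with rfl | ht1'
    · rw [sub_self, Real.zero_rpow (by linarith : p - 1 ≠ 0), zero_mul]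
      exact Real.rpow_nonneg (abs_nonneg _) p
    · have h1t : (0 : ℝ) < 1 - t := by linarith
      set u := (|a| - t) / (1 - t) with hu
      have hu0 : 0 ≤ u := div_nonneg (by linarith) h1t.le
      have hsum : (1 - t) * u + t * 1 = |a| := by
        rw [hu]; field_simp; ring
      have hcu : (1 - t) * u = |a| - t := by
        rw [hu]; field_simp
      have hconv := (convexOn_rpow hp).2 (Set.mem_Ici.mpr hu0)
        (Set.mem_Ici.mpr zero_le_one) h1t.le ht0 (by ring)
      simp only [smul_eq_mul, Real.one_rpow, hsum] at hconv
      -- hconv : |a| ^ p ≤ (1 - t) * u ^ p + t * 1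
      have step1 : (1 - t) ^ (p - 1) * (|a| ^ p - t) ≤
          (1 - t) ^ (p - 1) * ((1 - t) * u ^ p) := by
        apply mul_le_mul_of_nonneg_left _ (Real.rpow_nonneg h1t.le _)
        nlinarith [hconv]
      have step2 : (1 - t) ^ (p - 1) * ((1 - t) * u ^ p) = (|a| - t) ^ p := by
        rw [← mul_assoc, ← Real.rpow_add_one h1t.ne' (p - 1), sub_add_cancel,
          ← Real.mul_rpow h1t.le hu0, hcu]
      calc (1 - t) ^ (p - 1) * (|a| ^ p - t) ≤ (|a| - t) ^ p := by rw [← step2]; exact step1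
      _ ≤ |a - t| ^ p := hmain
end

section
/- Let d ≥ 2, p ≥ 1, s ∈ (0,1), and define for v = (v', v_d) ∈ ℝ^{d-1} × ℝ the quantity f(v) = ∫_{ℝ^{d-1}} |v'·z' + v_d|^p (|z'|² + 1)^{-(d+ps+p)/2} dz'. Then f(v) ≥ (η₁/2)|v_d|^p + (η₂/2)|v'|^p, where η₁ = ∫_{ℝ^{d-1}} (|z'|²+1)^{-(d+ps+p)/2} dz' and η₂ = ∫_{ℝ^{d-1}} |z₁|^p (|z'|²+1)^{-(d+ps+p)/2} dz'. -/
open MeasureTheory Real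

section Aux

lemma aux_abs_rpow_add {p : ℝ} (hp : 1 ≤ p) (x y : ℝ) :
    |x| ^ p + |y| ^ p ≤ |x + y| ^ p + |x - y| ^ p := by
  have hp0 : 0 ≤ p := by linarith
  have key : |x| + |y| ≤ max |x + y| |x - y| := by
    rcases le_total 0 x with hx | hx <;> rcases le_total 0 y with hy | hy
    · exact le_max_of_le_left (le_of_eq (by
        rw [abs_of_nonneg hx, abs_of_nonneg hy, abs_of_nonneg (by linarith)]))
    · exact le_max_of_le_right (le_of_eq (by
        rw [abs_of_nonneg hx, abs_of_nonpos hy, abs_of_nonneg (by linarith)]; ring))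
    · exact le_max_of_le_right (le_of_eq (by
        rw [abs_of_nonpos hx, abs_of_nonneg hy, abs_of_nonpos (by linarith)]; ring))
    · exact le_max_of_le_left (le_of_eq (by
        rw [abs_of_nonpos hx, abs_of_nonpos hy, abs_of_nonpos (by linarith)]; ring))
  have h1 : |x| ^ p + |y| ^ p ≤ (|x| + |y|) ^ p := by
    have h := NNReal.add_rpow_le_rpow_add (⟨|x|, abs_nonneg x⟩ : NNReal)
      (⟨|y|, abs_nonneg y⟩ : NNReal) hp
    exact_mod_cast h
  have h2 : (|x| + |y|) ^ p ≤ max |x + y| |x - y| ^ p :=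
    Real.rpow_le_rpow (by positivity) key hp0
  have h3 : max |x + y| |x - y| ^ p ≤ |x + y| ^ p + |x - y| ^ p := by
    rcases max_cases |x + y| |x - y| with ⟨h, _⟩ | ⟨h, _⟩ <;> rw [h]
    · nlinarith [Real.rpow_nonneg (abs_nonneg (x - y)) p]
    · nlinarith [Real.rpow_nonneg (abs_nonneg (x + y)) p]
  linarith

lemma aux_integrable_master {n : ℕ} {p α : ℝ} (hp : 0 ≤ p) (hα : (n : ℝ) + p < 2 * α) :
    Integrable (fun z : EuclideanSpace ℝ (Fin n) =>
      (1 + ‖z‖) ^ p * (‖z‖ ^ 2 + 1) ^ (-α)) := by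
  have hfin : (Module.finrank ℝ (EuclideanSpace ℝ (Fin n)) : ℝ) < 2 * α - p := by
    rw [finrank_euclideanSpace_fin]; linarith
  have h2α : 0 < 2 * α := by
    have : (0:ℝ) ≤ (n:ℝ) := Nat.cast_nonneg n
    linarith
  refine ((integrable_one_add_norm hfin).const_mul ((2 : ℝ) ^ α)).mono'
    ?_ (Filter.Eventually.of_forall fun z => ?_)
  · have c1 : Continuous fun z : EuclideanSpace ℝ (Fin n) => (1 + ‖z‖) ^ p :=
      Continuous.rpow_const (by continuity) (fun z => Or.inl (by positivity))
    have c2 : Continuous fun z : EuclideanSpace ℝ (Fin n) => (‖z‖ ^ 2 + 1) ^ (-α) :=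
      Continuous.rpow_const (by continuity) (fun z => Or.inl (by positivity))
    exact (c1.mul c2).aestronglyMeasurable
  · have hz1 : (0:ℝ) < 1 + ‖z‖ := by positivity
    have hb : ((‖z‖ : ℝ) ^ 2 + 1) ^ (-α) ≤ 2 ^ α * (1 + ‖z‖) ^ (-(2 * α)) := by
      have h := rpow_neg_one_add_norm_sq_le z h2α
      rw [show -(2 * α) / 2 = -α by ring, show 2 * α / 2 = α by ring,
        add_comm (1:ℝ) (‖z‖ ^ 2)] at h
      exact h
    have habs : |(1 + ‖z‖) ^ p * (‖z‖ ^ 2 + 1) ^ (-α)|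
        = (1 + ‖z‖) ^ p * (‖z‖ ^ 2 + 1) ^ (-α) := abs_of_nonneg (by positivity)
    rw [Real.norm_eq_abs, habs]
    calc (1 + ‖z‖) ^ p * (‖z‖ ^ 2 + 1) ^ (-α)
        ≤ (1 + ‖z‖) ^ p * (2 ^ α * (1 + ‖z‖) ^ (-(2 * α))) := by
          apply mul_le_mul_of_nonneg_left hb (by positivity)
      _ = 2 ^ α * (1 + ‖z‖) ^ (-(2 * α - p)) := by
          rw [show -(2 * α - p) = p + -(2 * α) by ring, Real.rpow_add hz1]
          ring

lemma aux_integrable_g {n : ℕ} {p α : ℝ} (hp : 1 ≤ p) (hα : (n : ℝ) + p < 2 * α)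
    (v : EuclideanSpace ℝ (Fin n)) (c : ℝ) :
    Integrable (fun z : EuclideanSpace ℝ (Fin n) =>
      |(inner ℝ v z : ℝ) + c| ^ p * (‖z‖ ^ 2 + 1) ^ (-α)) := by
  have hp0 : 0 ≤ p := by linarith
  refine ((aux_integrable_master hp0 hα).const_mul ((‖v‖ + |c|) ^ p)).mono'
    ?_ (Filter.Eventually.of_forall fun z => ?_)
  · have c1 : Continuous fun z : EuclideanSpace ℝ (Fin n) => |(inner ℝ v z : ℝ) + c| ^ p := by
      apply Continuous.rpow_const _ (fun z => Or.inr hp0)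
      exact ((continuous_const.inner continuous_id').add continuous_const).abs
    have c2 : Continuous fun z : EuclideanSpace ℝ (Fin n) => (‖z‖ ^ 2 + 1) ^ (-α) :=
      Continuous.rpow_const (by continuity) (fun z => Or.inl (by positivity))
    exact (c1.mul c2).aestronglyMeasurable
  · have h1 : |(inner ℝ v z : ℝ) + c| ≤ (‖v‖ + |c|) * (1 + ‖z‖) := by
      have h2 : |(inner ℝ v z : ℝ)| ≤ ‖v‖ * ‖z‖ := abs_real_inner_le_norm v z
      have h3 : |(inner ℝ v z : ℝ) + c| ≤ |(inner ℝ v z : ℝ)| + |c| := abs_add_le _ _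
      have h4 : (0:ℝ) ≤ |c| := abs_nonneg c
      have h5 : (0:ℝ) ≤ ‖v‖ := norm_nonneg v
      have h6 : (0:ℝ) ≤ ‖z‖ := norm_nonneg z
      nlinarith
    have h7 : |(inner ℝ v z : ℝ) + c| ^ p ≤ ((‖v‖ + |c|) * (1 + ‖z‖)) ^ p :=
      Real.rpow_le_rpow (abs_nonneg _) h1 hp0
    rw [Real.mul_rpow (by positivity) (by positivity)] at h7
    rw [Real.norm_eq_abs, abs_of_nonneg (by positivity)]
    calc |(inner ℝ v z : ℝ) + c| ^ p * (‖z‖ ^ 2 + 1) ^ (-α)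
        ≤ (‖v‖ + |c|) ^ p * (1 + ‖z‖) ^ p * (‖z‖ ^ 2 + 1) ^ (-α) := by
          apply mul_le_mul_of_nonneg_right h7 (by positivity)
      _ = (‖v‖ + |c|) ^ p * ((1 + ‖z‖) ^ p * (‖z‖ ^ 2 + 1) ^ (-α)) := by ring

lemma aux_integrable_w {n : ℕ} {p α : ℝ} (hp : 1 ≤ p) (hα : (n : ℝ) + p < 2 * α) :
    Integrable (fun z : EuclideanSpace ℝ (Fin n) => (‖z‖ ^ 2 + 1) ^ (-α)) := by
  have hp0 : 0 ≤ p := by linarith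
  refine (aux_integrable_master hp0 hα).mono'
    ?_ (Filter.Eventually.of_forall fun z => ?_)
  · exact (Continuous.rpow_const (by continuity)
      (fun z => Or.inl (by positivity))).aestronglyMeasurable
  · rw [Real.norm_eq_abs, abs_of_nonneg (by positivity)]
    have h1 : (1:ℝ) ≤ (1 + ‖z‖) ^ p := Real.one_le_rpow (by linarith [norm_nonneg z]) hp0
    nlinarith [Real.rpow_nonneg (by positivity : (0:ℝ) ≤ ‖z‖ ^ 2 + 1) (-α)]

lemma aux_neg {n : ℕ} {p α : ℝ} (v : EuclideanSpace ℝ (Fin n)) (c : ℝ) :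
    (∫ z : EuclideanSpace ℝ (Fin n), |(inner ℝ v z : ℝ) + c| ^ p * (‖z‖ ^ 2 + 1) ^ (-α))
      = ∫ z : EuclideanSpace ℝ (Fin n), |(inner ℝ v z : ℝ) - c| ^ p * (‖z‖ ^ 2 + 1) ^ (-α) := by
  have h := (Measure.measurePreserving_neg
      (volume : Measure (EuclideanSpace ℝ (Fin n)))).integral_comp
    (Homeomorph.neg (EuclideanSpace ℝ (Fin n))).measurableEmbedding
    (fun z => |(inner ℝ v z : ℝ) - c| ^ p * (‖z‖ ^ 2 + 1) ^ (-α))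
  rw [← h]
  congr 1
  funext z
  simp only [Homeomorph.coe_neg, Pi.neg_apply, inner_neg_right, norm_neg]
  rw [show -(inner ℝ v z : ℝ) - c = -((inner ℝ v z : ℝ) + c) by ring, abs_neg]

lemma aux_rot {n : ℕ} {p α : ℝ} (hp : 1 ≤ p) (i0 : Fin n) (v : EuclideanSpace ℝ (Fin n)) :
    (∫ z : EuclideanSpace ℝ (Fin n), |(inner ℝ v z : ℝ)| ^ p * (‖z‖ ^ 2 + 1) ^ (-α))
      = ‖v‖ ^ p * ∫ z : EuclideanSpace ℝ (Fin n), |z i0| ^ p * (‖z‖ ^ 2 + 1) ^ (-α) := by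
  have hpne : p ≠ 0 := by positivity
  rcases eq_or_ne v 0 with rfl | hv
  · simp [Real.zero_rpow hpne, norm_zero]
  · set u : EuclideanSpace ℝ (Fin n) := ‖v‖⁻¹ • v with hu_def
    have hu : ‖u‖ = 1 := norm_smul_inv_norm hv
    have hon : Orthonormal ℝ (Set.restrict {i0} (fun _ : Fin n => u)) := by
      constructor
      · intro i; exact hu
      · intro i j hij
        exact absurd (Subtype.ext (i.2.trans j.2.symm)) hij
    obtain ⟨b, hb⟩ := hon.exists_orthonormalBasis_extension_of_card_eq
      (by simp [finrank_euclideanSpace_fin])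
    have hbu : b i0 = u := hb i0 rfl
    set T : EuclideanSpace ℝ (Fin n) ≃ₗᵢ[ℝ] EuclideanSpace ℝ (Fin n) := b.repr.symm with hT
    have hTe : T (EuclideanSpace.single i0 1) = u := by
      rw [← b.repr_self i0, hT, LinearIsometryEquiv.symm_apply_apply, hbu]
    have hveq : ‖v‖ • u = v := by
      rw [hu_def, smul_smul, mul_inv_cancel₀ (norm_ne_zero_iff.mpr hv), one_smul]
    have h := T.measurePreserving.integral_comp T.toHomeomorph.measurableEmbedding
      (fun z => |(inner ℝ v z : ℝ)| ^ p * (‖z‖ ^ 2 + 1) ^ (-α))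
    rw [← h]
    have hpt : ∀ z : EuclideanSpace ℝ (Fin n),
        |(inner ℝ v (T z) : ℝ)| ^ p * (‖T z‖ ^ 2 + 1) ^ (-α)
          = ‖v‖ ^ p * (|z i0| ^ p * (‖z‖ ^ 2 + 1) ^ (-α)) := by
      intro z
      have hinner : (inner ℝ v (T z) : ℝ) = ‖v‖ * z i0 := by
        have e1 : (inner ℝ v (T z) : ℝ) = (inner ℝ ((‖v‖ : ℝ) • u) (T z) : ℝ) := by rw [hveq]
        rw [e1, real_inner_smul_left, ← hTe, T.inner_map_map,
          EuclideanSpace.inner_single_left]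
        simp
      rw [T.norm_map, hinner, abs_mul, abs_of_nonneg (norm_nonneg v),
        Real.mul_rpow (norm_nonneg v) (abs_nonneg _)]
      ring
    simp only [hpt]
    exact integral_const_mul _ _

end Aux

/-- Lower bound for f(v) = ∫_{ℝ^{d-1}} |v'·z' + v_d|^p (|z'|²+1)^{-(d+ps+p)/2} dz':
f(v) ≥ (η₁/2)|v_d|^p + (η₂/2)|v'|^p. -/
theorem frakf_lower_bound
    (d : ℕ) (hd : 2 ≤ d) (p s : ℝ) (hp : 1 ≤ p) (hs : s ∈ Set.Ioo (0 : ℝ) 1)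
    (v' : EuclideanSpace ℝ (Fin (d - 1))) (vd : ℝ) :
    (∫ z' : EuclideanSpace ℝ (Fin (d - 1)),
        (‖z'‖ ^ 2 + 1) ^ (-(((d : ℝ) + p * s + p) / 2))) / 2 * |vd| ^ p
      + (∫ z' : EuclideanSpace ℝ (Fin (d - 1)),
          |z' ⟨0, by omega⟩| ^ p * (‖z'‖ ^ 2 + 1) ^ (-(((d : ℝ) + p * s + p) / 2))) / 2
        * ‖v'‖ ^ p
    ≤ ∫ z' : EuclideanSpace ℝ (Fin (d - 1)),
        |(inner ℝ v' z' : ℝ) + vd| ^ p * (‖z'‖ ^ 2 + 1) ^ (-(((d : ℝ) + p * s + p) / 2)) := by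
  obtain ⟨hs0, hs1⟩ := hs
  have hp0 : 0 ≤ p := by linarith
  set α : ℝ := ((d : ℝ) + p * s + p) / 2 with hα_def
  have hα : ((d - 1 : ℕ) : ℝ) + p < 2 * α := by
    have hcast : ((d - 1 : ℕ) : ℝ) = (d : ℝ) - 1 := by
      have h1 : (1 : ℕ) ≤ d := by omega
      push_cast [Nat.cast_sub h1]; ring
    have hps : 0 < p * s := mul_pos (by linarith) hs0
    rw [hcast, hα_def]; ring_nf; linarith
  set i0 : Fin (d - 1) := ⟨0, by omega⟩ with hi0
  show (∫ z' : EuclideanSpace ℝ (Fin (d - 1)), (‖z'‖ ^ 2 + 1) ^ (-α)) / 2 * |vd| ^ p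
      + (∫ z' : EuclideanSpace ℝ (Fin (d - 1)),
          |z' i0| ^ p * (‖z'‖ ^ 2 + 1) ^ (-α)) / 2 * ‖v'‖ ^ p
    ≤ ∫ z' : EuclideanSpace ℝ (Fin (d - 1)),
        |(inner ℝ v' z' : ℝ) + vd| ^ p * (‖z'‖ ^ 2 + 1) ^ (-α)
  have hIw : Integrable (fun z : EuclideanSpace ℝ (Fin (d - 1)) => (‖z‖ ^ 2 + 1) ^ (-α)) :=
    aux_integrable_w hp hα
  have hIg : ∀ c : ℝ, Integrable (fun z : EuclideanSpace ℝ (Fin (d - 1)) =>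
      |(inner ℝ v' z : ℝ) + c| ^ p * (‖z‖ ^ 2 + 1) ^ (-α)) := fun c => aux_integrable_g hp hα v' c
  have hI0 : Integrable (fun z : EuclideanSpace ℝ (Fin (d - 1)) =>
      |(inner ℝ v' z : ℝ)| ^ p * (‖z‖ ^ 2 + 1) ^ (-α)) := by
    simpa using hIg 0
  have hIsub : Integrable (fun z : EuclideanSpace ℝ (Fin (d - 1)) =>
      |(inner ℝ v' z : ℝ) - vd| ^ p * (‖z‖ ^ 2 + 1) ^ (-α)) := by
    simpa [sub_eq_add_neg] using hIg (-vd)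
  have hIc : Integrable (fun z : EuclideanSpace ℝ (Fin (d - 1)) =>
      |vd| ^ p * (‖z‖ ^ 2 + 1) ^ (-α)) := hIw.const_mul _
  have hmono :
      (∫ z : EuclideanSpace ℝ (Fin (d - 1)),
        (|(inner ℝ v' z : ℝ)| ^ p * (‖z‖ ^ 2 + 1) ^ (-α)
          + |vd| ^ p * (‖z‖ ^ 2 + 1) ^ (-α)))
      ≤ ∫ z : EuclideanSpace ℝ (Fin (d - 1)),
        (|(inner ℝ v' z : ℝ) + vd| ^ p * (‖z‖ ^ 2 + 1) ^ (-α)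
          + |(inner ℝ v' z : ℝ) - vd| ^ p * (‖z‖ ^ 2 + 1) ^ (-α)) := by
    apply integral_mono (hI0.add hIc) ((hIg vd).add hIsub)
    intro z
    have key := aux_abs_rpow_add hp (inner ℝ v' z : ℝ) vd
    have hw : (0:ℝ) ≤ (‖z‖ ^ 2 + 1) ^ (-α) := by positivity
    have h2 := mul_le_mul_of_nonneg_right key hw
    rw [add_mul, add_mul] at h2
    exact h2
  rw [integral_add hI0 hIc, integral_add (hIg vd) hIsub, integral_const_mul,
    aux_rot hp i0 v', ← aux_neg v' vd] at hmono
  linarith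
end
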